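/- Let w ∈ αΣ* ∩ Σ*‾α be a non-α-crossing (m,n)-word with m, n ≥ 2, with α-prefixes u₀ <_p ⋯ <_p u_{m−1} and complemented ‾α-suffixes v₀, …, v_{n−1}. If u₁ ≠ v₁, then for all 1 ≤ i < m and 1 ≤ j < n, the sets H*_α(w‾u_i) and H*_α(v_j w) are disjoint. -/
import Mathlib


open List

namespace Hairpin

variable {S : Type} [DecidableEq S]

/-- Antimorphic extension of an involution to words. -/
def comp (bar : S → S) (w : List S) : List S := (w.map bar).reverse

/-- Right hairpin completion w.r.t. primer `a`. -/
def RH (bar : S → S) (a w z : List S) : Prop :=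
  ∃ γ β : List S, w = γ ++ a ++ β ++ comp bar a ∧ z = w ++ comp bar γ

/-- Left hairpin completion w.r.t. primer `a`. -/
def LH (bar : S → S) (a w z : List S) : Prop :=
  ∃ γ β : List S, w = a ++ β ++ comp bar a ++ comp bar γ ∧ z = γ ++ w

/-- One hairpin completion step. -/
def HC (bar : S → S) (a w z : List S) : Prop := RH bar a w z ∨ LH bar a w z

/-- Iterated hairpin completion `H*_α(w)`. -/
def HCstar (bar : S → S) (a w : List S) : Set (List S) :=
  { z | Relation.ReflTransGen (HC bar a) w z }

/-- `w` is non-`a`-crossing: every occurrence of `a` starts no later than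
every occurrence of `comp bar a`. -/
def NonCrossing (bar : S → S) (a w : List S) : Prop :=
  ∀ i j : ℕ, a <+: w.drop i → comp bar a <+: w.drop j → i ≤ j

/-- The set of `a`-prefixes of `w`. -/
def Pa (a w : List S) : Set (List S) := { u | u ++ a <+: w }

/-- The set of `‾a`-suffixes of `w` (the elements are the words `‾v`). -/
def Sa (bar : S → S) (a w : List S) : Set (List S) :=
  { x | comp bar a ++ x <:+ w }

/-- The set of complements of `‾a`-suffixes of `w`, i.e. `‾(S_‾α(w))`. -/
def barSa (bar : S → S) (a w : List S) : Set (List S) :=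
  { v | comp bar a ++ comp bar v <:+ w }

/-- Kleene star of a set of words: all finite concatenations. -/
def star (X : Set (List S)) : Set (List S) :=
  { x | ∃ l : List (List S), (∀ y ∈ l, y ∈ X) ∧ x = l.flatten }

/-- `ind_α(x)`: the number of occurrences of `a` in `x ++ a` other than the
suffix occurrence, i.e. the number of positions `i < |x|` where `a` occurs. -/
def inda (a x : List S) : ℕ :=
  ((Finset.range x.length).filter (fun i => a <+: (x ++ a).drop i)).card

set_option linter.unusedSectionVars false
set_option linter.unusedVariables false
set_option maxHeartbeats 1000000

lemma comp_append (bar : S → S) (x y : List S) :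
    comp bar (x ++ y) = comp bar y ++ comp bar x := by simp [comp]
lemma comp_comp (hbar : Function.Involutive bar) (x : List S) :
    comp bar (comp bar x) = x := by
  simp [comp, List.map_reverse, List.map_map, hbar.comp_self]
lemma comp_length (bar : S → S) (x : List S) : (comp bar x).length = x.length := by
  simp [comp]

lemma comp_eq_nil (bar : S → S) {x : List S} (h : comp bar x = []) : x = [] := by
  have := comp_length bar x
  rw [h] at this
  exact List.length_eq_zero_iff.mp this.symm

lemma comp_inj (hbar : Function.Involutive bar) {x y : List S}
    (h : comp bar x = comp bar y) : x = y := by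
  have := congrArg (comp bar) h
  rwa [comp_comp hbar, comp_comp hbar] at this

lemma comp_suffix_of_prefix (bar : S → S) {x y : List S} (h : x <+: y) :
    comp bar x <:+ comp bar y := by
  obtain ⟨t, rfl⟩ := h
  rw [comp_append]
  exact List.suffix_append _ _

lemma comp_prefix_of_suffix (bar : S → S) {x y : List S} (h : x <:+ y) :
    comp bar x <+: comp bar y := by
  obtain ⟨t, rfl⟩ := h
  rw [comp_append]
  exact List.prefix_append _ _

def Good (a u1 x : List S) : Prop := x = [] ∨ u1 ++ a <+: x ++ a
lemma good_a_prefix {a u1 x : List S} (hpa : a <+: u1 ++ a) (hx : Good a u1 x) :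
    a <+: x ++ a := by
  rcases hx with rfl | hx
  · simp
  · exact hpa.trans hx
lemma prefix_append_right {x a y t : List S} (h : a ++ t = y ++ a) :
    x ++ a <+: x ++ (y ++ a) :=
  ⟨t, by rw [← h]; simp [List.append_assoc]⟩
lemma good_append' {a u1 x y : List S} (hx : u1 ++ a <+: x ++ a)
    (hy : a <+: y ++ a) : Good a u1 (x ++ y) := by
  right
  obtain ⟨t, ht⟩ := hy
  exact hx.trans (by rw [List.append_assoc]; exact prefix_append_right ht)
lemma good_append {a u1 x y : List S} (hpa : a <+: u1 ++ a)
    (hx : Good a u1 x) (hy : Good a u1 y) : Good a u1 (x ++ y) := by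
  rcases hx with rfl | hx
  · simpa using hy
  · exact good_append' hx (good_a_prefix hpa hy)
lemma split3 {X Y γ m δ : List S} (h : X ++ Y = γ ++ (m ++ δ)) :
    (∃ δ₁, X = γ ++ (m ++ δ₁) ∧ δ = δ₁ ++ Y) ∨
    (∃ γ₂, γ = X ++ γ₂ ∧ Y = γ₂ ++ (m ++ δ)) ∨
    (∃ m₁ m₂, m = m₁ ++ m₂ ∧ m₁ ≠ [] ∧ m₂ ≠ [] ∧ X = γ ++ m₁ ∧ Y = m₂ ++ δ) := by
  rcases List.append_eq_append_iff.mp h with ⟨t, ht1, ht2⟩ | ⟨t, ht1, ht2⟩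
  · exact Or.inr (Or.inl ⟨t, ht1, ht2⟩)
  · rcases List.append_eq_append_iff.mp ht2 with ⟨s, hs1, hs2⟩ | ⟨s, hs1, hs2⟩
    · exact Or.inl ⟨s, by rw [ht1, hs1], hs2⟩
    · by_cases htn : t = []
      · subst htn
        refine Or.inr (Or.inl ⟨[], by simpa using ht1.symm, ?_⟩)
        simp at hs1
        rw [hs2, hs1]; simp
      · by_cases hsn : s = []
        · subst hsn
          refine Or.inl ⟨[], ?_, ?_⟩
          · rw [ht1]; simp at hs1; rw [hs1]; simp
          · simpa using hs2.symm
        · exact Or.inr (Or.inr ⟨t, s, hs1, htn, hsn, ht1, hs2⟩)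


structure Inv (bar : S → S) (a u1 z : List S) : Prop where
  pre : u1 ++ a <+: z
  i4 : ∀ γ δ, z = γ ++ (a ++ δ) → Good a u1 γ
  i5 : ∀ γ δ, z = γ ++ (comp bar a ++ δ) → Good a u1 (comp bar δ)
  i3 : ∀ γ₁ δ₁ γ₂ δ₂, z = γ₁ ++ (a ++ δ₁) → z = γ₂ ++ (comp bar a ++ δ₂) →
        γ₁.length ≤ γ₂.length

lemma inv_append {bar : S → S} {a u1 : List S}
    (hbar : Function.Involutive bar) (ha : a ≠ [])
    (hpa : a <+: u1 ++ a)
    {w x ξ : List S} (hxne : x ≠ [])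
    (hfa : w = x ++ (a ++ ξ))
    (hwb : comp bar a <:+ w)
    (hpre : u1 ++ a <+: w)
    (hA : ∀ γ δ, w = γ ++ (a ++ δ) → Good a u1 γ)
    (hNC : ∀ γ₁ δ₁ γ₂ δ₂, w = γ₁ ++ (a ++ δ₁) → w = γ₂ ++ (comp bar a ++ δ₂) →
      γ₁.length ≤ γ₂.length)
    (hT : ∀ γ δ, w = γ ++ (comp bar a ++ δ) → a <+: comp bar δ ++ a) :
    Inv bar a u1 (w ++ comp bar x) := by
  have hk : 0 < a.length := List.length_pos_iff.mpr ha
  obtain ⟨Z₁, hZ⟩ := hwb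
  have hGx : Good a u1 x := hA x ξ hfa
  have hxg : u1 ++ a <+: x ++ a := by
    rcases hGx with h | h
    · exact absurd h hxne
    · exact h
  -- no new occurrences of `a`
  have hnna : ∀ γ δ, w ++ comp bar x = γ ++ (a ++ δ) →
      ∃ δ', w = γ ++ (a ++ δ') ∧ δ = δ' ++ comp bar x := by
    intro γ δ hfac
    rcases split3 hfac with ⟨δ', h1, h2⟩ | ⟨γ', h1, h2⟩ | ⟨m₁, m₂, hm, hm1, hm2, h1, h2⟩
    · exact ⟨δ', h1, h2⟩
    · exfalso
      have hx' : x = comp bar δ ++ (comp bar a ++ comp bar γ') := by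
        have h3 := congrArg (comp bar) h2
        simp only [comp_append, comp_comp hbar] at h3
        simpa using h3
      have f1 : w = (comp bar δ ++ (comp bar a ++ comp bar γ')) ++ (a ++ ξ) := by
        rw [hfa, hx']
      have f2 : w = comp bar δ ++ (comp bar a ++ (comp bar γ' ++ (a ++ ξ))) := by
        rw [f1]; simp [List.append_assoc]
      have hle := hNC _ _ _ _ f1 f2
      simp only [List.length_append, comp_length] at hle
      omega
    · exfalso
      have hcomb : γ ++ m₁ = Z₁ ++ comp bar a := by rw [← h1]; exact hZ.symm
      rcases List.append_eq_append_iff.mp hcomb with ⟨t, ht1, ht2⟩ | ⟨t, ht1, ht2⟩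
      · have l1 := congrArg List.length ht2
        have l2 := congrArg List.length hm
        have l3 := List.length_pos_iff.mpr hm2
        simp only [List.length_append, comp_length] at l1 l2
        omega
      · have key : comp bar a ++ comp bar x = t ++ (a ++ δ) := by
          rw [ht2, h2, hm]; simp [List.append_assoc]
        have key2 : x ++ a = comp bar δ ++ (comp bar a ++ comp bar t) := by
          have h3 := congrArg (comp bar) key
          simp only [comp_append, comp_comp hbar] at h3
          simpa using h3
        have f2 : w = comp bar δ ++ (comp bar a ++ (comp bar t ++ ξ)) := by
          rw [hfa, ← List.append_assoc, key2]; simp [List.append_assoc]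
        have hle := hNC _ _ _ _ hfa f2
        have lx := congrArg List.length h2
        have l3 := List.length_pos_iff.mpr hm2
        simp only [List.length_append, comp_length] at hle lx
        omega
  refine ⟨hpre.trans (List.prefix_append _ _), ?_, ?_, ?_⟩
  · intro γ δ hf
    obtain ⟨δ', h1, _⟩ := hnna γ δ hf
    exact hA _ _ h1
  · intro γ δ hf
    rcases split3 hf with ⟨δ', h1, h2⟩ | ⟨γ', h1, h2⟩ | ⟨m₁, m₂, hm, hm1, hm2, h1, h2⟩
    · rw [h2, comp_append, comp_comp hbar]
      exact good_append' hxg (hT _ _ h1)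
    · have hx' : x = comp bar δ ++ (a ++ comp bar γ') := by
        have h3 := congrArg (comp bar) h2
        simp only [comp_append, comp_comp hbar] at h3
        simpa using h3
      have f : w = comp bar δ ++ (a ++ (comp bar γ' ++ (a ++ ξ))) := by
        rw [hfa, hx']; simp [List.append_assoc]
      exact hA _ _ f
    · have hcomb : γ ++ m₁ = Z₁ ++ comp bar a := by rw [← h1]; exact hZ.symm
      rcases List.append_eq_append_iff.mp hcomb with ⟨t, ht1, ht2⟩ | ⟨t, ht1, ht2⟩
      · exfalso
        have l1 := congrArg List.length ht2
        have l2 := congrArg List.length hm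
        have l3 := List.length_pos_iff.mpr hm2
        simp only [List.length_append, comp_length] at l1 l2
        omega
      · have key : comp bar a ++ comp bar x = t ++ (comp bar a ++ δ) := by
          conv_lhs => rw [ht2, h2]
          conv_rhs => rw [hm]
          simp [List.append_assoc]
        have key2 : x ++ a = comp bar δ ++ (a ++ comp bar t) := by
          have h3 := congrArg (comp bar) key
          simp only [comp_append, comp_comp hbar] at h3
          simpa using h3
        have f : w = comp bar δ ++ (a ++ (comp bar t ++ ξ)) := by
          rw [hfa, ← List.append_assoc, key2]; simp [List.append_assoc]
        exact hA _ _ f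
  · intro γ₁ δ₁ γ₂ δ₂ hf1 hf2
    obtain ⟨δ₁', h1, _⟩ := hnna _ _ hf1
    have lw := congrArg List.length h1
    simp only [List.length_append] at lw
    rcases split3 hf2 with ⟨δ₂', h2, _⟩ | ⟨γ₂', h2, _⟩ | ⟨m₁, m₂, hm, hm1, hm2, h2, h3⟩
    · exact hNC _ _ _ _ h1 h2
    · have l2 := congrArg List.length h2
      simp only [List.length_append] at l2
      omega
    · have l2 := congrArg List.length h2
      have l3 := congrArg List.length hm
      have l4 := List.length_pos_iff.mpr hm2
      simp only [List.length_append, comp_length] at l2 l3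
      omega

lemma inv_RH {bar : S → S} {a u1 : List S}
    (hbar : Function.Involutive bar) (ha : a ≠ []) (hpa : a <+: u1 ++ a)
    {z γ₀ β : List S} (hz : Inv bar a u1 z)
    (hfz : z = γ₀ ++ (a ++ (β ++ comp bar a))) :
    Inv bar a u1 (z ++ comp bar γ₀) := by
  by_cases hγ : γ₀ = []
  · subst hγ; simpa [comp] using hz
  · refine inv_append hbar ha hpa hγ hfz ?_ hz.pre hz.i4 hz.i3 ?_
    · exact ⟨γ₀ ++ (a ++ β), by rw [hfz]; simp [List.append_assoc]⟩
    · intro γ δ h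
      exact good_a_prefix hpa (hz.i5 γ δ h)

lemma inv_LH {bar : S → S} {a u1 : List S}
    (hbar : Function.Involutive bar) (ha : a ≠ []) (hpa : a <+: u1 ++ a)
    {z γ₀ β : List S} (hz : Inv bar a u1 z)
    (hfz : z = a ++ (β ++ (comp bar a ++ comp bar γ₀))) :
    Inv bar a u1 (γ₀ ++ z) := by
  have hk : 0 < a.length := List.length_pos_iff.mpr ha
  by_cases hγ : γ₀ = []
  · subst hγ; simpa using hz
  have hfz5 : z = (a ++ β) ++ (comp bar a ++ comp bar γ₀) := by
    rw [hfz]; simp [List.append_assoc]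
  have hGx : Good a u1 γ₀ := by
    have := hz.i5 _ _ hfz5
    rwa [comp_comp hbar] at this
  have haz : a <+: z := ⟨_, hfz.symm⟩
  have hnlb : ∀ γ₂ δ₂, γ₀ ++ z = γ₂ ++ (comp bar a ++ δ₂) →
      ∃ γ₂', γ₂ = γ₀ ++ γ₂' ∧ z = γ₂' ++ (comp bar a ++ δ₂) := by
    intro γ₂ δ₂ hf
    rcases split3 hf with ⟨δ₂', h1, h2⟩ | ⟨γ₂', h1, h2⟩ | ⟨m₁, m₂, hm, hm1, hm2, h1, h2⟩
    · exfalso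
      have hcg : comp bar γ₀ = comp bar δ₂' ++ (a ++ comp bar γ₂) := by
        have h3 := congrArg (comp bar) h1
        simp only [comp_append, comp_comp hbar] at h3
        simpa using h3
      have f1 : z = ((a ++ β) ++ (comp bar a ++ comp bar δ₂')) ++ (a ++ comp bar γ₂) := by
        rw [hfz5, hcg]; simp [List.append_assoc]
      have hle := hz.i3 _ _ _ _ f1 hfz5
      simp only [List.length_append, comp_length] at hle
      omega
    · exact ⟨γ₂', h1, h2⟩
    · exfalso
      have hza : m₂ ++ δ₂ = a ++ (β ++ (comp bar a ++ comp bar γ₀)) := by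
        rw [← h2]; exact hfz
      rcases List.append_eq_append_iff.mp hza with ⟨t, ht1, ht2⟩ | ⟨t, ht1, ht2⟩
      · have key : γ₀ ++ a = γ₂ ++ (comp bar a ++ t) := by
          conv_lhs => rw [h1, ht1]
          conv_rhs => rw [hm]
          simp [List.append_assoc]
        have key2 : comp bar a ++ comp bar γ₀ = comp bar t ++ (a ++ comp bar γ₂) := by
          have h3 := congrArg (comp bar) key
          simp only [comp_append, comp_comp hbar] at h3
          simpa using h3
        have f1 : z = ((a ++ β) ++ comp bar t) ++ (a ++ comp bar γ₂) := by
          rw [hfz5, key2]; simp [List.append_assoc]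
        have hle := hz.i3 _ _ _ _ f1 hfz5
        have l1 := congrArg List.length ht1
        have l2 := congrArg List.length hm
        have l3 := List.length_pos_iff.mpr hm1
        simp only [List.length_append, comp_length] at hle l1 l2
        omega
      · have l1 := congrArg List.length ht1
        have l2 := congrArg List.length hm
        have l3 := List.length_pos_iff.mpr hm1
        simp only [List.length_append, comp_length] at l1 l2
        omega
  have hgne : u1 ++ a <+: γ₀ ++ a := by
    rcases hGx with h | h
    · exact absurd h hγ
    · exact h
  refine ⟨?_, ?_, ?_, ?_⟩
  · have h2 : γ₀ ++ a <+: γ₀ ++ z := by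
      obtain ⟨t, ht⟩ := haz
      exact ⟨t, by rw [List.append_assoc, ht]⟩
    exact hgne.trans h2
  · intro γ δ hf
    rcases split3 hf with ⟨δ', h1, h2⟩ | ⟨γ', h1, h2⟩ | ⟨m₁, m₂, hm, hm1, hm2, h1, h2⟩
    · have hcg : comp bar γ₀ = comp bar δ' ++ (comp bar a ++ comp bar γ) := by
        have h3 := congrArg (comp bar) h1
        simp only [comp_append, comp_comp hbar] at h3
        simpa using h3
      have f1 : z = ((a ++ β) ++ (comp bar a ++ comp bar δ')) ++
          (comp bar a ++ comp bar γ) := by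
        rw [hfz5, hcg]; simp [List.append_assoc]
      have := hz.i5 _ _ f1
      rwa [comp_comp hbar] at this
    · rw [h1]; exact good_append hpa hGx (hz.i4 _ _ h2)
    · have hza : m₂ ++ δ = a ++ (β ++ (comp bar a ++ comp bar γ₀)) := by
        rw [← h2]; exact hfz
      rcases List.append_eq_append_iff.mp hza with ⟨t, ht1, ht2⟩ | ⟨t, ht1, ht2⟩
      · have key : γ₀ ++ a = γ ++ (a ++ t) := by
          conv_lhs => rw [h1, ht1]
          conv_rhs => rw [hm]
          simp [List.append_assoc]
        have key2 : comp bar a ++ comp bar γ₀ = comp bar t ++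
            (comp bar a ++ comp bar γ) := by
          have h3 := congrArg (comp bar) key
          simp only [comp_append, comp_comp hbar] at h3
          simpa using h3
        have f1 : z = ((a ++ β) ++ comp bar t) ++ (comp bar a ++ comp bar γ) := by
          rw [hfz5, key2]; simp [List.append_assoc]
        have := hz.i5 _ _ f1
        rwa [comp_comp hbar] at this
      · exfalso
        have l1 := congrArg List.length ht1
        have l2 := congrArg List.length hm
        have l3 := List.length_pos_iff.mpr hm1
        simp only [List.length_append] at l1 l2
        omega
  · intro γ δ hf
    obtain ⟨γ', h1, h2⟩ := hnlb _ _ hf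
    exact hz.i5 _ _ h2
  · intro γ₁ δ₁ γ₂ δ₂ hf1 hf2
    obtain ⟨γ₂', hg2, hz2⟩ := hnlb _ _ hf2
    have lg2 : γ₂.length = γ₀.length + γ₂'.length := by rw [hg2]; simp
    rcases split3 hf1 with ⟨δ₁', h1, h2⟩ | ⟨γ₁', h1, h2⟩ | ⟨m₁, m₂, hm, hm1, hm2, h1, h2⟩
    · have := congrArg List.length h1
      simp only [List.length_append] at this
      omega
    · have := hz.i3 _ _ _ _ h2 hz2
      have l1 := congrArg List.length h1
      simp only [List.length_append] at l1
      omega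
    · have := congrArg List.length h1
      have l3 := List.length_pos_iff.mpr hm1
      simp only [List.length_append] at this
      omega


lemma inv_HC {bar : S → S} {a u1 z z' : List S}
    (hbar : Function.Involutive bar) (ha : a ≠ []) (hpa : a <+: u1 ++ a)
    (h : HC bar a z z') (hz : Inv bar a u1 z) : Inv bar a u1 z' := by
  rcases h with ⟨γ, β, h1, h2⟩ | ⟨γ, β, h1, h2⟩
  · rw [h2]
    exact inv_RH (β := β) hbar ha hpa hz (by rw [h1]; simp [List.append_assoc])
  · rw [h2]
    exact inv_LH (β := β) hbar ha hpa hz (by rw [h1]; simp [List.append_assoc])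

lemma inv_star {bar : S → S} {a u1 z z' : List S}
    (hbar : Function.Involutive bar) (ha : a ≠ []) (hpa : a <+: u1 ++ a)
    (h : Relation.ReflTransGen (HC bar a) z z') (hz : Inv bar a u1 z) :
    Inv bar a u1 z' := by
  induction h with
  | refl => exact hz
  | tail _ hstep ih => exact inv_HC hbar ha hpa hstep ih

lemma HC_comp {bar : S → S} {a z z' : List S} (hbar : Function.Involutive bar)
    (h : HC bar a z z') : HC bar a (comp bar z) (comp bar z') := by
  rcases h with ⟨γ, β, h1, h2⟩ | ⟨γ, β, h1, h2⟩
  · right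
    refine ⟨γ, comp bar β, ?_, ?_⟩
    · rw [h1]; simp only [comp_append, comp_comp hbar]; simp [List.append_assoc]
    · rw [h2, comp_append, comp_comp hbar]
  · left
    refine ⟨γ, comp bar β, ?_, ?_⟩
    · rw [h1]; simp only [comp_append, comp_comp hbar]; simp [List.append_assoc]
    · rw [h2, comp_append]

lemma star_comp {bar : S → S} {a x z : List S} (hbar : Function.Involutive bar)
    (h : Relation.ReflTransGen (HC bar a) x z) :
    Relation.ReflTransGen (HC bar a) (comp bar x) (comp bar z) := by
  induction h with
  | refl => exact Relation.ReflTransGen.refl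
  | tail _ hstep ih => exact ih.tail (HC_comp hbar hstep)


lemma init_side {bar : S → S} {a u1 W x : List S}
    (hbar : Function.Involutive bar) (ha : a ≠ [])
    (hWa : a <+: W)
    (hWb : comp bar a <:+ W)
    (hpre : u1 ++ a <+: W)
    (hxne : x ≠ [])
    (hxfa : ∃ ξ, W = x ++ (a ++ ξ))
    (hA : ∀ γ δ, W = γ ++ (a ++ δ) → Good a u1 γ)
    (hNC : ∀ γ₁ δ₁ γ₂ δ₂, W = γ₁ ++ (a ++ δ₁) → W = γ₂ ++ (comp bar a ++ δ₂) →
      γ₁.length ≤ γ₂.length) :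
    ∀ z ∈ HCstar bar a (W ++ comp bar x), Inv bar a u1 z := by
  have hpa : a <+: u1 ++ a :=
    List.prefix_of_prefix_length_le hWa hpre (by simp)
  have hT : ∀ γ δ, W = γ ++ (comp bar a ++ δ) → a <+: comp bar δ ++ a := by
    intro γ δ h
    have hs1 : comp bar a ++ δ <:+ W := ⟨γ, h.symm⟩
    have hs2 : comp bar a <:+ comp bar a ++ δ :=
      List.suffix_of_suffix_length_le hWb hs1 (by simp)
    have h3 := comp_prefix_of_suffix bar hs2
    simp only [comp_append, comp_comp hbar] at h3
    exact h3
  intro z hz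
  obtain ⟨ξ, hξ⟩ := hxfa
  have hz' : Relation.ReflTransGen (HC bar a) (W ++ comp bar x) z := hz
  exact inv_star hbar ha hpa hz'
    (inv_append hbar ha hpa hxne hξ hWb hpre hA hNC hT)


theorem stmt17 (bar : S → S) (hbar : Function.Involutive bar)
    (a w : List S) (ha : a ≠ comp bar a)
    (hp : a <+: w) (hs : comp bar a <:+ w)
    (hnc : NonCrossing bar a w) (m : ℕ) (u : Fin m → List S)
    (huchain : ∀ i j : Fin m, i < j → u i <+: u j ∧ u i ≠ u j)
    (hPu : Pa a w = Set.range u)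
    (n : ℕ) (v : Fin n → List S)
    (hvchain : ∀ i j : Fin n, i < j → comp bar (v i) <:+ comp bar (v j) ∧ v i ≠ v j)
    (hSv : Sa bar a w = Set.range (fun i => comp bar (v i)))
    (hm : 2 ≤ m) (hn : 2 ≤ n)
    (huv : u ⟨1, by omega⟩ ≠ v ⟨1, by omega⟩) :
    ∀ i : Fin m, 1 ≤ (i : ℕ) → ∀ j : Fin n, 1 ≤ (j : ℕ) →
      HCstar bar a (w ++ comp bar (u i)) ∩ HCstar bar a (v j ++ w) = ∅ := by
  have hane : a ≠ [] := by
    intro h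
    exact ha (by rw [h]; rfl)
  have hPu' := Set.ext_iff.mp hPu
  have hSv' := Set.ext_iff.mp hSv
  obtain ⟨l0, hl0⟩ := (hPu' []).mp (show [] ++ a <+: w by simpa using hp)
  have hu0 : ∀ l : Fin m, (l : ℕ) = 0 → u l = [] := by
    intro l hl
    rcases eq_or_ne l l0 with h | h
    · rw [h, hl0]
    · have hlt : l < l0 := by
        rw [Fin.lt_def]
        have hne : l.1 ≠ l0.1 := fun hh => h (Fin.ext hh)
        omega
      obtain ⟨hpr, hne⟩ := huchain l l0 hlt
      rw [hl0] at hpr hne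
      exact absurd (List.prefix_nil.mp hpr) hne
  obtain ⟨l0v, hl0v⟩ := (hSv' []).mp (show comp bar a ++ [] <:+ w by simpa using hs)
  have hv0 : ∀ l : Fin n, (l : ℕ) = 0 → v l = [] := by
    intro l hl
    have hl0v' : v l0v = [] := comp_eq_nil bar hl0v
    rcases eq_or_ne l l0v with h | h
    · rw [h, hl0v']
    · have hlt : l < l0v := by
        rw [Fin.lt_def]
        have hne : l.1 ≠ l0v.1 := fun hh => h (Fin.ext hh)
        omega
      obtain ⟨hpr, hne⟩ := hvchain l l0v hlt
      have hl0v2 : comp bar (v l0v) = [] := hl0v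
      rw [hl0v2] at hpr
      have h2 := comp_eq_nil bar (List.suffix_nil.mp hpr)
      rw [hl0v'] at hne
      exact absurd h2 hne
  have h0m : (0 : ℕ) < m := by omega
  have h1m : (1 : ℕ) < m := by omega
  have h0n : (0 : ℕ) < n := by omega
  have h1n : (1 : ℕ) < n := by omega
  have hu1ne : u ⟨1, h1m⟩ ≠ [] := by
    obtain ⟨_, hne⟩ := huchain ⟨0, h0m⟩ ⟨1, h1m⟩ (by rw [Fin.lt_def]; exact Nat.zero_lt_one)
    rw [hu0 ⟨0, h0m⟩ rfl] at hne
    exact fun h => hne h.symm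
  have hv1ne : v ⟨1, h1n⟩ ≠ [] := by
    obtain ⟨_, hne⟩ := hvchain ⟨0, h0n⟩ ⟨1, h1n⟩ (by rw [Fin.lt_def]; exact Nat.zero_lt_one)
    rw [hv0 ⟨0, h0n⟩ rfl] at hne
    exact fun h => hne h.symm
  have huPa : ∀ l : Fin m, u l ++ a <+: w := fun l => (hPu' (u l)).mpr ⟨l, rfl⟩
  have hvSa : ∀ l : Fin n, comp bar a ++ comp bar (v l) <:+ w :=
    fun l => (hSv' (comp bar (v l))).mpr ⟨l, rfl⟩
  have hlen_u : ∀ l : Fin m, u l ≠ [] → (u ⟨1, h1m⟩).length ≤ (u l).length := by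
    intro l hne
    rcases lt_trichotomy (⟨1, h1m⟩ : Fin m) l with h | h | h
    · exact (huchain _ l h).1.length_le
    · rw [h]
    · exfalso
      have hl1 : l = ⟨0, h0m⟩ := Fin.ext (by have := Fin.lt_def.mp h; simp at this ⊢; omega)
      rw [hu0 l (by rw [hl1])] at hne
      exact hne rfl
  have hlen_v : ∀ l : Fin n, v l ≠ [] → (v ⟨1, h1n⟩).length ≤ (v l).length := by
    intro l hne
    rcases lt_trichotomy (⟨1, h1n⟩ : Fin n) l with h | h | h
    · have := (hvchain _ l h).1.length_le
      simpa [comp_length] using this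
    · rw [h]
    · exfalso
      have hl1 : l = ⟨0, h0n⟩ := Fin.ext (by have := Fin.lt_def.mp h; simp at this ⊢; omega)
      rw [hv0 l (by rw [hl1])] at hne
      exact hne rfl
  have hpre_u : u ⟨1, h1m⟩ ++ a <+: w := huPa _
  have hA_u : ∀ γ δ, w = γ ++ (a ++ δ) → Good a (u ⟨1, h1m⟩) γ := by
    intro γ δ hf
    have hpw : γ ++ a <+: w := ⟨δ, by rw [hf]; simp [List.append_assoc]⟩
    obtain ⟨l, hl⟩ := (hPu' γ).mp hpw
    rcases eq_or_ne γ [] with hγ | hγ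
    · exact Or.inl hγ
    · right
      have hlen : (u ⟨1, h1m⟩).length ≤ γ.length := by
        have := hlen_u l (by rw [hl]; exact hγ)
        rwa [hl] at this
      exact List.prefix_of_prefix_length_le hpre_u hpw (by simp; omega)
  have hNC_u : ∀ γ₁ δ₁ γ₂ δ₂, w = γ₁ ++ (a ++ δ₁) → w = γ₂ ++ (comp bar a ++ δ₂) →
      γ₁.length ≤ γ₂.length := by
    intro γ₁ δ₁ γ₂ δ₂ h1 h2
    have o1 : a <+: w.drop γ₁.length := by
      rw [h1, List.drop_left]
      exact List.prefix_append a δ₁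
    have o2 : comp bar a <+: w.drop γ₂.length := by
      rw [h2, List.drop_left]
      exact List.prefix_append _ _
    exact hnc _ _ o1 o2
  have hfact_v : ∀ y : List S, comp bar a ++ comp bar y <:+ w →
      ∃ ζ, comp bar w = y ++ (a ++ ζ) := by
    intro y hsuf
    obtain ⟨ζ, hζ⟩ := hsuf
    refine ⟨comp bar ζ, ?_⟩
    have h3 := congrArg (comp bar) hζ
    simp only [comp_append, comp_comp hbar] at h3
    rw [← h3]
    simp [List.append_assoc]
  have hWa_v : a <+: comp bar w := by
    have := comp_prefix_of_suffix bar hs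
    rwa [comp_comp hbar] at this
  have hWb_v : comp bar a <:+ comp bar w := comp_suffix_of_prefix bar hp
  obtain ⟨ζ1, hζ1⟩ := hfact_v (v ⟨1, h1n⟩) (hvSa _)
  have hpre_v : v ⟨1, h1n⟩ ++ a <+: comp bar w :=
    ⟨ζ1, by rw [hζ1]; simp [List.append_assoc]⟩
  have hA_v : ∀ γ δ, comp bar w = γ ++ (a ++ δ) → Good a (v ⟨1, h1n⟩) γ := by
    intro γ δ hf
    have hw' : w = comp bar δ ++ (comp bar a ++ comp bar γ) := by
      have h3 := congrArg (comp bar) hf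
      rw [comp_comp hbar] at h3
      simp only [comp_append] at h3
      rw [h3]; simp [List.append_assoc]
    have hmem : comp bar γ ∈ Sa bar a w := ⟨comp bar δ, hw'.symm⟩
    obtain ⟨l, hl⟩ := (hSv' _).mp hmem
    have hγl : v l = γ := comp_inj hbar hl
    rcases eq_or_ne γ [] with h | h
    · exact Or.inl h
    · right
      have hlen : (v ⟨1, h1n⟩).length ≤ γ.length := by
        have := hlen_v l (by rw [hγl]; exact h)
        rwa [hγl] at this
      have p2 : γ ++ a <+: comp bar w := ⟨δ, by rw [hf]; simp [List.append_assoc]⟩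
      exact List.prefix_of_prefix_length_le hpre_v p2 (by simp; omega)
  have hNC_v : ∀ γ₁ δ₁ γ₂ δ₂, comp bar w = γ₁ ++ (a ++ δ₁) →
      comp bar w = γ₂ ++ (comp bar a ++ δ₂) → γ₁.length ≤ γ₂.length := by
    intro γ₁ δ₁ γ₂ δ₂ h1 h2
    have hw1 : w = comp bar δ₁ ++ (comp bar a ++ comp bar γ₁) := by
      have h3 := congrArg (comp bar) h1
      rw [comp_comp hbar] at h3
      simp only [comp_append] at h3
      rw [h3]; simp [List.append_assoc]
    have hw2 : w = comp bar δ₂ ++ (a ++ comp bar γ₂) := by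
      have h3 := congrArg (comp bar) h2
      rw [comp_comp hbar] at h3
      simp only [comp_append, comp_comp hbar] at h3
      rw [h3]; simp [List.append_assoc]
    have o1 : a <+: w.drop (comp bar δ₂).length := by
      rw [hw2, List.drop_left]; exact List.prefix_append _ _
    have o2 : comp bar a <+: w.drop (comp bar δ₁).length := by
      rw [hw1, List.drop_left]; exact List.prefix_append _ _
    have hij := hnc _ _ o1 o2
    have e1 := congrArg List.length h1
    have e2 := congrArg List.length h2
    simp only [List.length_append, comp_length] at hij e1 e2
    omega
  intro i hi j hj
  rw [Set.eq_empty_iff_forall_notMem]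
  intro z hzmem
  have hui_ne : u i ≠ [] := by
    have hlt : (⟨0, h0m⟩ : Fin m) < i := by
      rw [Fin.lt_def]; exact (by omega : (0:ℕ) < (i:ℕ))
    obtain ⟨_, hne⟩ := huchain ⟨0, h0m⟩ i hlt
    rw [hu0 ⟨0, h0m⟩ rfl] at hne
    exact fun h => hne h.symm
  obtain ⟨ξ, hξ⟩ := huPa i
  have Iu : Inv bar a (u ⟨1, h1m⟩) z :=
    init_side hbar hane hp hs hpre_u hui_ne
      ⟨ξ, by rw [← hξ]; simp [List.append_assoc]⟩ hA_u hNC_u z hzmem.1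
  have hvj_ne : v j ≠ [] := by
    have hlt : (⟨0, h0n⟩ : Fin n) < j := by
      rw [Fin.lt_def]; exact (by omega : (0:ℕ) < (j:ℕ))
    obtain ⟨_, hne⟩ := hvchain ⟨0, h0n⟩ j hlt
    rw [hv0 ⟨0, h0n⟩ rfl] at hne
    exact fun h => hne h.symm
  have hz2' : Relation.ReflTransGen (HC bar a) (comp bar w ++ comp bar (v j))
      (comp bar z) := by
    have hst := star_comp hbar
      (show Relation.ReflTransGen (HC bar a) (v j ++ w) z from hzmem.2)
    rwa [comp_append] at hst
  have Iv : Inv bar a (v ⟨1, h1n⟩) (comp bar z) :=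
    init_side hbar hane hWa_v hWb_v hpre_v hvj_ne (hfact_v (v j) (hvSa j))
      hA_v hNC_v (comp bar z) hz2'
  obtain ⟨τ, hτ⟩ := Iu.pre
  have f1 : comp bar z = comp bar τ ++ (comp bar a ++ comp bar (u ⟨1, h1m⟩)) := by
    have h3 := congrArg (comp bar) hτ
    simp only [comp_append] at h3
    exact h3.symm
  have g1 := Iv.i5 _ _ f1
  rw [comp_comp hbar] at g1
  obtain ⟨σ, hσ⟩ := Iv.pre
  have f2 : z = comp bar σ ++ (comp bar a ++ comp bar (v ⟨1, h1n⟩)) := by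
    have h3 := congrArg (comp bar) hσ
    simp only [comp_append, comp_comp hbar] at h3
    exact h3.symm
  have g2 := Iu.i5 _ _ f2
  rw [comp_comp hbar] at g2
  rcases g1 with h1 | h1
  · exact hu1ne h1
  rcases g2 with h2 | h2
  · exact hv1ne h2
  have e : u ⟨1, h1m⟩ ++ a = v ⟨1, h1n⟩ ++ a :=
    List.IsPrefix.eq_of_length h2 (Nat.le_antisymm h2.length_le h1.length_le)
  exact huv (List.append_cancel_right e)


end Hairpin
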